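/- Let M ≥ 1, ξ > 0, and nonnegative reals ŷ_1,…,ŷ_M, y_1,…,y_M with W_m = e^{-ξŷ_m}/∑_j e^{-ξŷ_j}. Then (1/M)∑_m ŷ_m + ∑_m W_m y_m ≤ ŷ_k + y_k + ξ( (1/M)∑_m ŷ_m² + ∑_m W_m y_m² ) + (log M)/ξ for every k. -/

import Mathlib

lemma exp_quad_bound (x : ℝ) (hx : 0 ≤ x) : Real.exp (-x) ≤ 1 - x + x ^ 2 := by
  have h1 := Real.add_one_le_exp x
  have h2 := Real.add_one_le_exp (-x)
  have hm : Real.exp (-x) * Real.exp x = 1 := by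
    rw [← Real.exp_add]; simp
  nlinarith [Real.exp_pos (-x), Real.exp_pos x]

lemma log_sum_exp_le {M : ℕ} (hM : 0 < M) (ξ : ℝ) (hξ : 0 < ξ) (w a : Fin M → ℝ)
    (hw : ∀ m, 0 < w m) (hws : ∑ m, w m = 1) (ha : ∀ m, 0 ≤ a m) :
    Real.log (∑ m, w m * Real.exp (-ξ * a m)) ≤
      -ξ * ∑ m, w m * a m + ξ ^ 2 * ∑ m, w m * a m ^ 2 := by
  have : Nonempty (Fin M) := Fin.pos_iff_nonempty.mp hM
  have hSpos : 0 < ∑ m, w m * Real.exp (-ξ * a m) :=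
    Finset.sum_pos (fun m _ => mul_pos (hw m) (Real.exp_pos _)) Finset.univ_nonempty
  have hsum : ∑ m, w m * Real.exp (-ξ * a m) ≤
      ∑ m, w m * (1 - ξ * a m + (ξ * a m) ^ 2) := by
    refine Finset.sum_le_sum fun m _ => ?_
    refine mul_le_mul_of_nonneg_left ?_ (hw m).le
    have := exp_quad_bound (ξ * a m) (mul_nonneg hξ.le (ha m))
    simpa [neg_mul] using this
  have hexpand : ∑ m, w m * (1 - ξ * a m + (ξ * a m) ^ 2) =
      1 - ξ * ∑ m, w m * a m + ξ ^ 2 * ∑ m, w m * a m ^ 2 := by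
    have h : ∀ m ∈ Finset.univ, w m * (1 - ξ * a m + (ξ * a m) ^ 2) =
        w m - ξ * (w m * a m) + ξ ^ 2 * (w m * a m ^ 2) := fun m _ => by ring
    rw [Finset.sum_congr rfl h]
    rw [Finset.sum_add_distrib, Finset.sum_sub_distrib, ← Finset.mul_sum, ← Finset.mul_sum, hws]
  have hlog := Real.log_le_sub_one_of_pos hSpos
  linarith

theorem regret_rearranged (M : ℕ) (hM : 1 ≤ M) (ξ : ℝ) (hξ : 0 < ξ)
    (yhat y : Fin M → ℝ) (hyhat : ∀ m, 0 ≤ yhat m) (hy : ∀ m, 0 ≤ y m)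
    (W : Fin M → ℝ)
    (hW : ∀ m, W m = Real.exp (-ξ * yhat m) / ∑ j, Real.exp (-ξ * yhat j))
    (k : Fin M) :
    (1 / M) * ∑ m, yhat m + ∑ m, W m * y m ≤
      yhat k + y k + ξ * ((1 / M) * ∑ m, yhat m ^ 2 + ∑ m, W m * y m ^ 2)
        + Real.log M / ξ := by
  have hMpos : 0 < M := hM
  have : Nonempty (Fin M) := Fin.pos_iff_nonempty.mp hMpos
  have hMR : (0 : ℝ) < (M : ℝ) := by exact_mod_cast hMpos
  set S := ∑ j, Real.exp (-ξ * yhat j) with hSdef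
  have hSpos : 0 < S :=
    Finset.sum_pos (fun m _ => Real.exp_pos _) Finset.univ_nonempty
  have hWpos : ∀ m, 0 < W m := fun m => by
    rw [hW]; exact div_pos (Real.exp_pos _) hSpos
  have hWsum : ∑ m, W m = 1 := by
    simp only [hW]
    rw [← Finset.sum_div, div_self hSpos.ne']
  -- A := (1/M) * S, B := ∑ W m * exp (-ξ y m)
  set A := ∑ m, (fun _ : Fin M => 1 / (M : ℝ)) m * Real.exp (-ξ * yhat m) with hAdef
  set B := ∑ m, W m * Real.exp (-ξ * y m) with hBdef
  have hApos : 0 < A :=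
    Finset.sum_pos (fun m _ => mul_pos (by positivity) (Real.exp_pos _)) Finset.univ_nonempty
  have hBpos : 0 < B :=
    Finset.sum_pos (fun m _ => mul_pos (hWpos m) (Real.exp_pos _)) Finset.univ_nonempty
  have hA := log_sum_exp_le hMpos ξ hξ (fun _ => 1 / (M : ℝ)) yhat
    (fun _ => by positivity) (by simp [Finset.sum_const, Finset.card_univ]
                                 field_simp) hyhat
  have hB := log_sum_exp_le hMpos ξ hξ W y hWpos hWsum hy
  -- lower bound on A * B
  have hAB : (1 / (M : ℝ)) * Real.exp (-ξ * (yhat k + y k)) ≤ A * B := by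
    have hSB : Real.exp (-ξ * (yhat k + y k)) ≤ S * B := by
      have hBeq : S * B = ∑ m, Real.exp (-ξ * (yhat m + y m)) := by
        rw [hBdef, Finset.mul_sum]
        refine Finset.sum_congr rfl fun m _ => ?_
        rw [hW m]
        rw [mul_add, Real.exp_add]
        field_simp
      rw [hBeq]
      exact Finset.single_le_sum (f := fun m => Real.exp (-ξ * (yhat m + y m))) (fun m _ => (Real.exp_pos _).le) (Finset.mem_univ k)
    have hAeq : A = (1 / (M : ℝ)) * S := by
      rw [hAdef, hSdef, ← Finset.mul_sum]
    rw [hAeq, mul_assoc]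
    exact mul_le_mul_of_nonneg_left hSB (by positivity)
  have hlow : -Real.log M + (-ξ * (yhat k + y k)) ≤ Real.log A + Real.log B := by
    have h1 : Real.log ((1 / (M : ℝ)) * Real.exp (-ξ * (yhat k + y k))) ≤
        Real.log (A * B) := Real.log_le_log (by positivity) hAB
    rw [Real.log_mul (by positivity) (Real.exp_pos _).ne', Real.log_exp,
      Real.log_mul hApos.ne' hBpos.ne'] at h1
    have : Real.log (1 / (M : ℝ)) = -Real.log M := by
      rw [one_div, Real.log_inv]
    linarith [h1, this ▸ h1]
  -- convert the averaged sums
  have havg1 : ∑ m, (fun _ : Fin M => 1 / (M : ℝ)) m * yhat m = (1 / M) * ∑ m, yhat m := by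
    simp [Finset.mul_sum]
  have havg2 : ∑ m, (fun _ : Fin M => 1 / (M : ℝ)) m * yhat m ^ 2
      = (1 / M) * ∑ m, yhat m ^ 2 := by
    simp [Finset.mul_sum]
  rw [havg1, havg2] at hA
  have hmain : ξ * ((1 / M) * ∑ m, yhat m + ∑ m, W m * y m) ≤
      ξ * (yhat k + y k) + ξ ^ 2 * ((1 / M) * ∑ m, yhat m ^ 2 + ∑ m, W m * y m ^ 2)
        + Real.log M := by
    nlinarith [hA, hB, hlow]
  have hlogM : ξ * (Real.log M / ξ) = Real.log M := mul_div_cancel₀ _ hξ.ne'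
  rw [← mul_le_mul_iff_right₀ hξ]
  nlinarith [hmain, hlogM]
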